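/- Let U = [[A, B], [C, D]] be a block unitary on ℂ^m ⊕ ℂ^n with I − zD invertible for all |z| ≤ 1 (e.g. ‖D‖ < 1), and let V = {(z,w) ∈ 𝔻² : det(Ψ(z) − wI) = 0} where Ψ(z) = A + zB(I − zD)^{-1}C and 𝔻 is the open unit disk. Then for any sequence (zₖ, wₖ) in V converging to a point (z, w) with |z| = 1, one has |w| = 1. In other words, the closure of V meets the topological boundary of the closed bidisk only in the torus {(z,w) : |z| = |w| = 1}. -/

import Mathlib

open Matrix Filter

set_option maxHeartbeats 1000000 in
theorem distinguished_variety_exits_through_torus (m n : ℕ)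
    (A : Matrix (Fin m) (Fin m) ℂ) (B : Matrix (Fin m) (Fin n) ℂ)
    (C : Matrix (Fin n) (Fin m) ℂ) (D : Matrix (Fin n) (Fin n) ℂ)
    (hU : Matrix.fromBlocks A B C D ∈ Matrix.unitaryGroup (Fin m ⊕ Fin n) ℂ)
    (hD : ∀ z : ℂ, ‖z‖ ≤ 1 → IsUnit ((1 : Matrix (Fin n) (Fin n) ℂ) - z • D))
    (zs ws : ℕ → ℂ)
    (hmem : ∀ k, ‖zs k‖ < 1 ∧ ‖ws k‖ < 1 ∧
        ((A + zs k • (B * (1 - zs k • D)⁻¹ * C)) - ws k • 1).det = 0)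
    (z w : ℂ)
    (hz : Tendsto zs atTop (nhds z)) (hw : Tendsto ws atTop (nhds w))
    (hbdry : ‖z‖ = 1) :
    ‖w‖ = 1 := by
  -- the limit point z is still in the closed disk, so 1 - z•D is invertible
  have hzD : IsUnit ((1 : Matrix (Fin n) (Fin n) ℂ) - z • D) := hD z hbdry.le
  have hdetU : IsUnit ((1 : Matrix (Fin n) (Fin n) ℂ) - z • D).det :=
    (Matrix.isUnit_iff_isUnit_det _).mp hzD
  have hdet0 : ((1 : Matrix (Fin n) (Fin n) ℂ) - z • D).det ≠ 0 :=
    IsUnit.ne_zero hdetU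
  -- Step 1: continuity, so det(Ψ(z) - w•1) = 0
  have hMz : Tendsto (fun k => (1 : Matrix (Fin n) (Fin n) ℂ) - zs k • D) atTop
      (nhds ((1 : Matrix (Fin n) (Fin n) ℂ) - z • D)) :=
    tendsto_const_nhds.sub (hz.smul tendsto_const_nhds)
  have hinvC : ContinuousAt Inv.inv ((1 : Matrix (Fin n) (Fin n) ℂ) - z • D) := by
    refine continuousAt_matrix_inv _ ?_
    rw [Ring.inverse_eq_inv']
    exact continuousAt_inv₀ hdet0
  have hinv : Tendsto (fun k => ((1 : Matrix (Fin n) (Fin n) ℂ) - zs k • D)⁻¹) atTop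
      (nhds (((1 : Matrix (Fin n) (Fin n) ℂ) - z • D)⁻¹)) :=
    hinvC.tendsto.comp hMz
  have hBNC : Tendsto (fun k => B * ((1 : Matrix (Fin n) (Fin n) ℂ) - zs k • D)⁻¹ * C) atTop
      (nhds (B * ((1 : Matrix (Fin n) (Fin n) ℂ) - z • D)⁻¹ * C)) :=
    (((continuous_const.matrix_mul continuous_id).matrix_mul
      continuous_const).continuousAt).tendsto.comp hinv
  have hΨt : Tendsto
      (fun k => (A + zs k • (B * ((1 : Matrix (Fin n) (Fin n) ℂ) - zs k • D)⁻¹ * C)) - ws k • 1)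
      atTop (nhds ((A + z • (B * ((1 : Matrix (Fin n) (Fin n) ℂ) - z • D)⁻¹ * C)) - w • 1)) :=
    (tendsto_const_nhds.add (hz.smul hBNC)).sub (hw.smul tendsto_const_nhds)
  have hlim : Tendsto
      (fun k => ((A + zs k • (B * ((1 : Matrix (Fin n) (Fin n) ℂ) - zs k • D)⁻¹ * C))
        - ws k • 1).det)
      atTop (nhds (((A + z • (B * ((1 : Matrix (Fin n) (Fin n) ℂ) - z • D)⁻¹ * C))
        - w • 1).det)) :=
    (Continuous.matrix_det continuous_id).continuousAt.tendsto.comp hΨt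
  have hFk : (fun k => ((A + zs k • (B * ((1 : Matrix (Fin n) (Fin n) ℂ) - zs k • D)⁻¹ * C))
      - ws k • 1).det) = fun _ => (0 : ℂ) :=
    funext fun k => (hmem k).2.2
  rw [hFk] at hlim
  have hF0 : ((A + z • (B * (1 - z • D)⁻¹ * C)) - w • 1).det = 0 :=
    tendsto_nhds_unique hlim tendsto_const_nhds
  -- Step 2: get an eigenvector
  obtain ⟨v, hv0, hv⟩ := (Matrix.exists_mulVec_eq_zero_iff).mpr hF0
  have hΨv : (A + z • (B * (1 - z • D)⁻¹ * C)) *ᵥ v = w • v := by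
    rw [sub_mulVec, sub_eq_zero, smul_mulVec, one_mulVec] at hv
    exact hv
  -- Step 3: the unitary colligation argument
  set N := ((1 : Matrix (Fin n) (Fin n) ℂ) - z • D)⁻¹ with hN
  set h : Fin n → ℂ := N *ᵥ (C *ᵥ v) with hh
  have hEh : C *ᵥ v + z • (D *ᵥ h) = h := by
    have h1 : ((1 : Matrix (Fin n) (Fin n) ℂ) - z • D) * N = 1 :=
      Matrix.mul_nonsing_inv _ hdetU
    have h2 : ((1 : Matrix (Fin n) (Fin n) ℂ) - z • D) *ᵥ h = C *ᵥ v := by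
      rw [hh, mulVec_mulVec, h1, one_mulVec]
    rw [sub_mulVec, one_mulVec, smul_mulVec] at h2
    rw [← h2, sub_add_cancel]
  have hAB : A *ᵥ v + z • (B *ᵥ h) = w • v := by
    have h3 : (A + z • (B * N * C)) *ᵥ v = A *ᵥ v + z • (B *ᵥ h) := by
      rw [add_mulVec, smul_mulVec, Matrix.mul_assoc, ← mulVec_mulVec, ← mulVec_mulVec]
    rw [← h3]
    exact hΨv
  -- unitarity preserves the norm
  have hUU : star (Matrix.fromBlocks A B C D) * Matrix.fromBlocks A B C D = 1 :=
    Matrix.mem_unitaryGroup_iff'.mp hU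
  set x : (Fin m ⊕ Fin n) → ℂ := Sum.elim v (z • h) with hx
  have hUx : Matrix.fromBlocks A B C D *ᵥ x = Sum.elim (w • v) h := by
    rw [hx, Matrix.fromBlocks_mulVec]
    simp only [Sum.elim_comp_inl, Sum.elim_comp_inr, mulVec_smul]
    rw [hAB, hEh]
  have hnorm : star (Matrix.fromBlocks A B C D *ᵥ x) ⬝ᵥ
      (Matrix.fromBlocks A B C D *ᵥ x) = star x ⬝ᵥ x := by
    rw [star_mulVec, dotProduct_mulVec, vecMul_vecMul, ← Matrix.star_eq_conjTranspose,
      hUU, vecMul_one]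
  rw [hUx] at hnorm
  -- expand both sides of the norm identity
  have hz1 : (starRingEnd ℂ) z * z = 1 := by
    rw [mul_comm, Complex.mul_conj]
    norm_cast
    rw [Complex.normSq_eq_norm_sq, hbdry, one_pow]
  have key : (starRingEnd ℂ) w * w * (star v ⬝ᵥ v) + star h ⬝ᵥ h
      = star v ⬝ᵥ v + (starRingEnd ℂ) z * z * (star h ⬝ᵥ h) := by
    have := hnorm
    simp only [hx, Function.star_sumElim, sumElim_dotProduct_sumElim,
      star_smul, smul_dotProduct, dotProduct_smul, smul_eq_mul,
      RCLike.star_def] at this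
    linear_combination this
  rw [hz1, one_mul] at key
  have hSv : star v ⬝ᵥ v ≠ 0 := by
    intro hS
    apply hv0
    have hcast : star v ⬝ᵥ v = ∑ i, (Complex.normSq (v i) : ℂ) := by
      simp only [dotProduct, Pi.star_apply, RCLike.star_def]
      refine Finset.sum_congr rfl fun i _ => ?_
      rw [mul_comm, Complex.mul_conj]
    rw [hcast] at hS
    have h0 : ∑ i, Complex.normSq (v i) = 0 := by exact_mod_cast hS
    funext i
    have h1 := (Finset.sum_eq_zero_iff_of_nonneg
      (fun i _ => Complex.normSq_nonneg (v i))).mp h0 i (Finset.mem_univ i)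
    exact Complex.normSq_eq_zero.mp h1
  have hww : (starRingEnd ℂ) w * w = 1 := by
    have h4 : ((starRingEnd ℂ) w * w - 1) * (star v ⬝ᵥ v) = 0 := by
      linear_combination key
    rcases mul_eq_zero.mp h4 with h5 | h5
    · exact sub_eq_zero.mp h5
    · exact absurd h5 hSv
  -- conclude |w| = 1
  have h6 : ‖w‖ * ‖w‖ = 1 := by
    have := congrArg norm hww
    rwa [norm_mul, RCLike.norm_conj, norm_one] at this
  rcases mul_self_eq_one_iff.mp h6 with h7 | h7
  · exact h7
  · nlinarith [norm_nonneg w]
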